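/- Let M and N be compact Hausdorff topological 2-manifolds (topological manifolds locally homeomorphic to ℝ²), let P ⊂ M and Q ⊂ N be finite subsets, and let F : M∖P → N∖Q be a continuous proper map (i.e. preimages of compact subsets of N∖Q are compact). Then F extends continuously over the punctures: there exists a continuous map G : M → N such that G(x) = F(x) for every x ∈ M∖P and G(P) ⊆ Q. -/

import Mathlib

open Set Metric Filter Topology

lemma euclid_rank : 1 < Module.rank ℝ (EuclideanSpace ℝ (Fin 2)) := by
  rw [← Module.finrank_eq_rank, finrank_euclideanSpace_fin]
  exact_mod_cast one_lt_two

lemma punctured_closedBall_preconnected (c : EuclideanSpace ℝ (Fin 2)) {r : ℝ} (hr : 0 < r) :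
    IsPreconnected (closedBall c r \ {c}) := by
  set ψ : EuclideanSpace ℝ (Fin 2) → EuclideanSpace ℝ (Fin 2) :=
    fun x => c + (min ‖x‖ r) • ‖x‖⁻¹ • x with hψ
  have himg : ψ '' ({0}ᶜ) = closedBall c r \ {c} := by
    ext v
    constructor
    · rintro ⟨x, hx, rfl⟩
      have hx0 : ‖x‖ ≠ 0 := norm_ne_zero_iff.2 hx
      have hnorm : ‖ψ x - c‖ = min ‖x‖ r := by
        simp only [hψ, add_sub_cancel_left, norm_smul, norm_inv, norm_norm, Real.norm_eq_abs]
        rw [abs_of_nonneg (le_min (norm_nonneg x) hr.le)]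
        field_simp
        exact (abs_of_nonneg (norm_nonneg x)).symm
      have hpos : 0 < min ‖x‖ r := lt_min (norm_pos_iff.2 hx) hr
      constructor
      · rw [mem_closedBall, dist_eq_norm, hnorm]
        exact min_le_right _ _
      · simp only [mem_singleton_iff]
        intro h
        rw [h] at hnorm
        simp only [sub_self, norm_zero] at hnorm
        exact hpos.ne' hnorm.symm
    · rintro ⟨hv, hvc⟩
      refine ⟨v - c, sub_ne_zero.2 (fun h => hvc h), ?_⟩
      have h1 : ‖v - c‖ ≤ r := by rwa [mem_closedBall, dist_eq_norm] at hv
      have h2 : ‖v - c‖ ≠ 0 := norm_ne_zero_iff.2 (sub_ne_zero.2 fun h => hvc h)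
      simp only [hψ, min_eq_left h1, smul_smul]
      rw [mul_inv_cancel₀ h2, one_smul, add_sub_cancel]
  rw [← himg]
  have hcont : ContinuousOn ψ ({0}ᶜ : Set (EuclideanSpace ℝ (Fin 2))) := by
    apply ContinuousOn.add continuousOn_const
    apply ContinuousOn.fun_smul
    · exact ((continuous_norm.min continuous_const).continuousOn)
    · exact ContinuousOn.smul
        (ContinuousOn.inv₀ continuous_norm.continuousOn (fun x hx => norm_ne_zero_iff.2 hx))
        continuous_id.continuousOn
  exact (isConnected_compl_singleton_of_one_lt_rank euclid_rank 0).isPreconnected.image ψ hcont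


/-- A continuous proper map `F : M∖P → N∖Q` between the complements of finite sets of
points in compact Hausdorff topological 2-manifolds extends continuously over the
punctures, sending punctures to punctures. -/
theorem proper_map_extends_over_punctures
    (M N : Type*) [TopologicalSpace M] [TopologicalSpace N]
    [T2Space M] [T2Space N] [CompactSpace M] [CompactSpace N]
    [ChartedSpace (EuclideanSpace ℝ (Fin 2)) M]
    [ChartedSpace (EuclideanSpace ℝ (Fin 2)) N]
    (P : Set M) (Q : Set N) (hP : P.Finite) (hQ : Q.Finite)
    (F : {x : M // x ∉ P} → {y : N // y ∉ Q})
    (hFc : Continuous F)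
    (hFp : ∀ K : Set {y : N // y ∉ Q}, IsCompact K → IsCompact (F ⁻¹' K)) :
    ∃ G : M → N, Continuous G ∧ (∀ x : {x : M // x ∉ P}, G ↑x = ↑(F x)) ∧
      ∀ x ∈ P, G x ∈ Q := by
  classical
  haveI : NeBot (𝓝[≠] (0 : EuclideanSpace ℝ (Fin 2))) :=
    Module.punctured_nhds_neBot ℝ _ _
  rcases isEmpty_or_nonempty M with hM | hM
  · exact ⟨fun x => (IsEmpty.false x).elim,
      continuous_iff_continuousAt.2 fun x => (IsEmpty.false x).elim,
      fun x => (IsEmpty.false (x : M)).elim, fun x hx => (IsEmpty.false x).elim⟩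
  have hPc : IsClosed P := hP.isClosed
  have hPo : IsOpen Pᶜ := hPc.isOpen_compl
  -- M is infinite, hence there is a point outside P
  have hMinf : (univ : Set M).Infinite := by
    obtain ⟨x₀⟩ := hM
    set e := chartAt (EuclideanSpace ℝ (Fin 2)) x₀ with he
    have h1 : e.target.Infinite :=
      infinite_of_mem_nhds (e x₀) (e.open_target.mem_nhds (e.map_source (mem_chart_source _ x₀)))
    have h2 : (e.symm '' e.target).Infinite :=
      h1.image (e.symm.injOn)
    rw [e.symm_image_target_eq_source] at h2
    exact h2.mono (subset_univ _)
  obtain ⟨x₀, -, hx₀⟩ : (univ \ P).Nonempty := (hMinf.diff hP).nonempty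
  haveI hN : Nonempty N := ⟨(F ⟨x₀, hx₀⟩ : N)⟩
  -- the bare extension
  set f : M → N := fun x => if h : x ∉ P then (F ⟨x, h⟩ : N) else Classical.arbitrary N with hf
  have hfF : ∀ x : {x : M // x ∉ P}, f ↑x = ↑(F x) := by
    rintro ⟨x, hx⟩
    simp only [hf, dif_pos hx]
  have hf_contOn : ContinuousOn f Pᶜ := by
    rw [continuousOn_iff_continuous_restrict]
    have : Continuous fun s : {x : M // x ∈ Pᶜ} => ((F ⟨s.1, s.2⟩ : {y : N // y ∉ Q}) : N) :=
      continuous_subtype_val.comp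
        (hFc.comp (Continuous.subtype_mk continuous_subtype_val _))
    convert this using 1
    funext s
    exact dif_pos s.2
  have hf_prop : ∀ K : Set N, IsCompact K → K ⊆ Qᶜ →
      IsCompact {x : M | x ∉ P ∧ f x ∈ K} := by
    intro K hK hKQ
    have hK' : IsCompact ((Subtype.val : {y : N // y ∉ Q} → N) ⁻¹' K) := by
      rw [Subtype.isCompact_iff]
      have : (Subtype.val : {y : N // y ∉ Q} → N) '' (Subtype.val ⁻¹' K) = K := by
        apply subset_antisymm
        · rintro y ⟨z, hz, rfl⟩; exact hz
        · intro y hy; exact ⟨⟨y, hKQ hy⟩, hy, rfl⟩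
      rwa [this]
    have hc : IsCompact ((Subtype.val : {x : M // x ∉ P} → M) ''
        (F ⁻¹' (Subtype.val ⁻¹' K))) :=
      ((hFp _ hK').image continuous_subtype_val)
    convert hc using 1
    ext x
    simp only [mem_setOf_eq, mem_image, mem_preimage]
    constructor
    · rintro ⟨hx, hfx⟩
      exact ⟨⟨x, hx⟩, by rwa [← hfF ⟨x, hx⟩], rfl⟩
    · rintro ⟨⟨y, hy⟩, hmem, rfl⟩
      exact ⟨hy, by rwa [hfF ⟨y, hy⟩]⟩
  -- key limit lemma
  have key : ∀ p ∈ P, ∃ q ∈ Q, Tendsto f (𝓝[Pᶜ] p) (𝓝 q) := by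
    intro p hp
    set e := chartAt (EuclideanSpace ℝ (Fin 2)) p with he
    have hpe : p ∈ e.source := mem_chart_source _ p
    have hO : IsOpen (e.target ∩ e.symm ⁻¹' ((P \ {p})ᶜ)) :=
      e.isOpen_inter_preimage_symm ((hP.diff (t := {p})).isClosed).isOpen_compl
    have hpeO : e p ∈ e.target ∩ e.symm ⁻¹' ((P \ {p})ᶜ) := by
      refine ⟨e.map_source hpe, ?_⟩
      rw [mem_preimage, e.left_inv hpe]
      simp
    obtain ⟨ε, hε0, hεO⟩ := Metric.isOpen_iff.1 hO _ hpeO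
    set C : ℝ → Set M := fun r => e.symm '' (closedBall (e p) r \ {e p}) with hC
    have hball : ∀ r, 0 < r → r < ε →
        closedBall (e p) r \ {e p} ⊆ e.target ∩ e.symm ⁻¹' ((P \ {p})ᶜ) := by
      intro r hr hrε z hz
      exact hεO (lt_of_le_of_lt hz.1 hrε)
    have hnotP : ∀ r, 0 < r → r < ε → ∀ z ∈ closedBall (e p) r \ {e p}, e.symm z ∉ P := by
      intro r h1 h2 z hz hmem
      have hzO := hball r h1 h2 hz
      have hzp : e.symm z = p := by
        by_contra hne
        exact hzO.2 ⟨hmem, hne⟩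
      exact hz.2 (by rw [← e.right_inv hzO.1, hzp]; exact rfl)
    have hCsub : ∀ r, 0 < r → r < ε → C r ⊆ Pᶜ := by
      rintro r h1 h2 x ⟨z, hz, rfl⟩
      exact hnotP r h1 h2 z hz
    have hCconn : ∀ r, 0 < r → r < ε → IsPreconnected (C r) := by
      intro r h1 h2
      exact (punctured_closedBall_preconnected (e p) h1).image _
        (e.continuousOn_symm.mono fun z hz => (hball r h1 h2 hz).1)
    have hCmem : ∀ r, 0 < r → r < ε → C r ∈ 𝓝[Pᶜ] p := by
      intro r h1 h2
      rw [mem_nhdsWithin]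
      refine ⟨e.source ∩ e ⁻¹' ball (e p) r, e.isOpen_inter_preimage isOpen_ball,
        ⟨hpe, mem_ball_self h1⟩, ?_⟩
      rintro x ⟨⟨hxs, hxb⟩, hxP⟩
      refine ⟨e x, ⟨ball_subset_closedBall hxb, ?_⟩, e.left_inv hxs⟩
      intro hex
      exact hxP ((e.injOn hxs hpe hex) ▸ hp)
    have hCne : ∀ r, 0 < r → (C r).Nonempty := by
      intro r h1
      apply Set.Nonempty.image
      have hmem : closedBall (e p) r \ {e p} ∈ 𝓝[≠] (e p) := by
        rw [diff_eq]
        exact inter_mem (mem_nhdsWithin_of_mem_nhds (closedBall_mem_nhds _ h1))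
          self_mem_nhdsWithin
      exact Filter.nonempty_of_mem hmem
    have hbasis : ∀ S ∈ 𝓝[Pᶜ] p, ∃ r, 0 < r ∧ r < ε ∧ C r ⊆ S := by
      intro S hS
      rw [mem_nhdsWithin] at hS
      obtain ⟨T, hTo, hpT, hTS⟩ := hS
      have h1 : e '' (T ∩ e.source) ∈ 𝓝 (e p) :=
        e.image_mem_nhds hpe ((hTo.inter e.open_source).mem_nhds ⟨hpT, hpe⟩)
      obtain ⟨r₀, hr₀, hball0⟩ :=
        Metric.mem_nhds_iff.1 (inter_mem h1 (ball_mem_nhds (e p) hε0))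
      refine ⟨min (r₀ / 2) (ε / 2), by positivity,
        lt_of_le_of_lt (min_le_right _ _) (by linarith), ?_⟩
      rintro x ⟨z, hz, rfl⟩
      have hzb : z ∈ ball (e p) r₀ := by
        rw [mem_ball]
        calc dist z (e p) ≤ min (r₀ / 2) (ε / 2) := hz.1
          _ ≤ r₀ / 2 := min_le_left _ _
          _ < r₀ := by linarith
      obtain ⟨⟨t, ⟨htT, hts⟩, htz⟩, hzε⟩ := hball0 hzb
      have hsymm : e.symm z = t := by rw [← htz, e.left_inv hts]
      have hzP : e.symm z ∈ Pᶜ := by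
        intro hmem
        have hzO := hεO hzε
        have hzp : e.symm z = p := by
          by_contra hne
          exact hzO.2 ⟨hmem, hne⟩
        exact hz.2 (by rw [← e.right_inv hzO.1, hzp]; exact rfl)
      exact hTS ⟨hsymm ▸ htT, hzP⟩
    have hesc : ∀ U : Set N, IsOpen U → Q ⊆ U → {x : M | f x ∈ U} ∈ 𝓝[Pᶜ] p := by
      intro U hUo hQU
      have hA : IsCompact {x : M | x ∉ P ∧ f x ∈ Uᶜ} :=
        hf_prop _ hUo.isClosed_compl.isCompact (compl_subset_compl.2 hQU)
      have hpA : p ∈ {x : M | x ∉ P ∧ f x ∈ Uᶜ}ᶜ := fun h => h.1 hp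
      have h1 : {x : M | x ∉ P ∧ f x ∈ Uᶜ}ᶜ ∈ 𝓝[Pᶜ] p :=
        mem_nhdsWithin_of_mem_nhds (hA.isClosed.isOpen_compl.mem_nhds hpA)
      filter_upwards [h1, self_mem_nhdsWithin] with x hx1 hx2
      by_contra hfx
      exact hx1 ⟨hx2, hfx⟩
    obtain ⟨V, hV, hVd⟩ := hQ.t2_separation
    have hU₀o : IsOpen (⋃ r ∈ Q, V r) := isOpen_biUnion fun r _ => (hV r).2
    have hQU₀ : Q ⊆ ⋃ r ∈ Q, V r := fun r hr => mem_biUnion hr (hV r).1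
    obtain ⟨r₁, hr₁0, hr₁ε, hr₁sub⟩ := hbasis _ (hesc _ hU₀o hQU₀)
    obtain ⟨x₁, hx₁⟩ := hCne r₁ hr₁0
    obtain ⟨q₀, hq₀Q, hq₀⟩ := mem_iUnion₂.1 (hr₁sub hx₁)
    have hVdisj : Disjoint (V q₀) (⋃ r ∈ Q \ {q₀}, V r) := by
      rw [Set.disjoint_left]
      intro a ha hmem
      obtain ⟨r, hr, har⟩ := mem_iUnion₂.1 hmem
      exact (hVd hq₀Q hr.1 (Ne.symm hr.2)).le_bot ⟨ha, har⟩
    have hsuv : f '' C r₁ ⊆ V q₀ ∪ ⋃ r ∈ Q \ {q₀}, V r := by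
      rintro y ⟨x, hx, rfl⟩
      obtain ⟨r, hrQ, hyr⟩ := mem_iUnion₂.1 (hr₁sub hx)
      by_cases hrq : r = q₀
      · left; rwa [hrq] at hyr
      · right; exact mem_biUnion ⟨hrQ, hrq⟩ hyr
    have himgV : f '' C r₁ ⊆ V q₀ :=
      IsPreconnected.subset_left_of_subset_union (hV q₀).2
        (isOpen_biUnion fun r _ => (hV r).2) hVdisj hsuv
        ⟨f x₁, ⟨x₁, hx₁, rfl⟩, hq₀⟩
        ((hCconn r₁ hr₁0 hr₁ε).image f (hf_contOn.mono (hCsub _ hr₁0 hr₁ε)))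
    refine ⟨q₀, hq₀Q, ?_⟩
    rw [tendsto_def]
    intro W hW
    obtain ⟨W', hW'W, hW'o, hqW'⟩ := mem_nhds_iff.1 hW
    have hU₁o : IsOpen ((V q₀ ∩ W') ∪ ⋃ r ∈ Q \ {q₀}, V r) :=
      ((hV q₀).2.inter hW'o).union (isOpen_biUnion fun r _ => (hV r).2)
    have hQU₁ : Q ⊆ (V q₀ ∩ W') ∪ ⋃ r ∈ Q \ {q₀}, V r := by
      intro r hr
      by_cases hrq : r = q₀
      · subst hrq
        exact Or.inl ⟨(hV r).1, hqW'⟩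
      · exact Or.inr (mem_biUnion ⟨hr, hrq⟩ (hV r).1)
    obtain ⟨r₂, hr₂0, hr₂ε, hr₂sub⟩ :=
      hbasis _ (inter_mem (hesc _ hU₁o hQU₁) (hCmem r₁ hr₁0 hr₁ε))
    apply mem_of_superset (hCmem r₂ hr₂0 hr₂ε)
    intro x hx
    obtain ⟨hxU₁, hxC1⟩ := hr₂sub hx
    have hfx : f x ∈ V q₀ := himgV ⟨x, hxC1, rfl⟩
    rcases hxU₁ with h | h
    · exact hW'W h.2
    · exfalso
      obtain ⟨r, hr, hxr⟩ := mem_iUnion₂.1 h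
      exact (hVd hq₀Q hr.1 (Ne.symm hr.2)).le_bot ⟨hfx, hxr⟩
  choose q hqQ hqT using key
  refine ⟨fun x => if h : x ∈ P then q x h else f x, ?_, ?_, ?_⟩
  · rw [continuous_iff_continuousAt]
    intro x
    by_cases hx : x ∈ P
    · have hGx : (if h : x ∈ P then q x h else f x) = q x hx := dif_pos hx
      rw [ContinuousAt, hGx]
      have hsplit : 𝓝 x = 𝓝[Pᶜ] x ⊔ 𝓝[P] x := by
        rw [← nhdsWithin_union, compl_union_self, nhdsWithin_univ]
      rw [hsplit, tendsto_sup]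
      constructor
      · refine (hqT x hx).congr' ?_
        exact eventuallyEq_of_mem self_mem_nhdsWithin fun y hy =>
          (show (if h : y ∈ P then q y h else f y) = f y from dif_neg hy).symm
      · rw [tendsto_def]
        intro W hW
        rw [mem_nhdsWithin]
        refine ⟨(P \ {x})ᶜ, ((hP.diff (t := {x})).isClosed).isOpen_compl, by simp, ?_⟩
        rintro y ⟨hy1, hy2⟩
        have : y = x := by
          by_contra hne
          exact hy1 ⟨hy2, hne⟩
        subst this
        simp only [mem_preimage, dif_pos hx]
        exact mem_of_mem_nhds hW
    · have := (hf_contOn.continuousAt (hPo.mem_nhds hx))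
      refine this.congr ?_
      filter_upwards [hPo.mem_nhds hx] with y hy
      exact (show (if h : y ∈ P then q y h else f y) = f y from dif_neg hy).symm
  · rintro ⟨x, hx⟩
    simp only [dif_neg hx]
    exact hfF ⟨x, hx⟩
  · intro x hx
    simp only [dif_pos hx]
    exact hqQ x hx
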